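/- The function h : C → C defined by h(ζ) = ζ^k / ζ̄^l for ζ ≠ 0 and h(0) = 0, where k, l are natural numbers with k ≥ l + r and r ≥ 1, is (r−1)-times continuously differentiable (as a function R² → R² = C) at 0. -/

import Mathlib

open Complex Asymptotics Filter

private noncomputable def Hfun (k l : ℕ) : ℂ → ℂ :=
  fun ζ => if ζ = 0 then 0 else ζ ^ k / (starRingEnd ℂ ζ) ^ l

private lemma Hfun_norm (k l : ℕ) (hkl : l + 1 ≤ k) (ζ : ℂ) :
    ‖Hfun k l ζ‖ = ‖ζ‖ ^ (k - l) := by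
  rcases eq_or_ne ζ 0 with rfl | h
  · simp [Hfun, zero_pow (by omega : k - l ≠ 0)]
  · have hn : ‖ζ‖ ≠ 0 := by simpa using h
    simp only [Hfun, if_neg h, norm_div, norm_pow, Complex.norm_conj]
    rw [pow_sub₀ _ (by simpa using hn) (by omega : l ≤ k)]
    simp [div_eq_mul_inv]

private lemma Hfun_continuous (k l : ℕ) (hkl : l + 1 ≤ k) : Continuous (Hfun k l) := by
  rw [continuous_iff_continuousAt]
  intro ζ
  rcases eq_or_ne ζ 0 with rfl | h
  · have h0 : Hfun k l 0 = 0 := by simp [Hfun]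
    rw [ContinuousAt, h0, tendsto_zero_iff_norm_tendsto_zero]
    simp_rw [Hfun_norm k l hkl]
    have := ((continuous_norm (E := ℂ)).pow (k - l)).tendsto 0
    simpa [Pi.pow_def, zero_pow (by omega : k - l ≠ 0)] using this
  · have hc : ContinuousAt (fun ζ : ℂ => ζ ^ k / (starRingEnd ℂ ζ) ^ l) ζ := by
      apply ContinuousAt.div (by fun_prop)
        ((Complex.continuous_conj.pow l).continuousAt)
        (pow_ne_zero _ (by simpa using h))
    apply hc.congr
    filter_upwards [isOpen_compl_singleton.mem_nhds h] with x hx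
    have hx' : x ≠ 0 := hx
    simp [Hfun, hx']

private noncomputable def Dfun (k l : ℕ) (ζ : ℂ) : ℂ →L[ℝ] ℂ :=
  ((k : ℂ) * Hfun (k - 1) l ζ) • ContinuousLinearMap.id ℝ ℂ
    - ((l : ℂ) * Hfun k (l + 1) ζ) • (conjCLE : ℂ ≃L[ℝ] ℂ).toContinuousLinearMap

private lemma hasFDerivAt_Hfun_ne (k l : ℕ) (hk : 1 ≤ k) {ζ : ℂ} (hζ : ζ ≠ 0) :
    HasFDerivAt (Hfun k l) (Dfun k l ζ) ζ := by
  have hcζ : (starRingEnd ℂ) ζ ≠ 0 := by simpa using hζ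
  have hconjfun : ⇑(conjCLE : ℂ ≃L[ℝ] ℂ) = starRingEnd ℂ := funext conjCLE_apply
  have hconj : HasFDerivAt (starRingEnd ℂ) (conjCLE : ℂ ≃L[ℝ] ℂ).toContinuousLinearMap ζ := by
    rw [← hconjfun]; exact (conjCLE : ℂ ≃L[ℝ] ℂ).hasFDerivAt
  have ha : HasFDerivAt (fun z : ℂ => z ^ k)
      (ContinuousLinearMap.restrictScalars ℝ
        (ContinuousLinearMap.smulRight (1 : ℂ →L[ℂ] ℂ) ((k : ℂ) * ζ ^ (k - 1)))) ζ :=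
    ((hasDerivAt_pow k ζ).hasFDerivAt).restrictScalars ℝ
  have hb0 : HasDerivAt (fun z : ℂ => (z ^ l)⁻¹)
      (-((l : ℂ) * (starRingEnd ℂ ζ) ^ (l - 1)) / ((starRingEnd ℂ ζ) ^ l) ^ 2)
      (starRingEnd ℂ ζ) :=
    (hasDerivAt_pow l _).inv (pow_ne_zero _ hcζ)
  have hb : HasFDerivAt (fun z : ℂ => ((starRingEnd ℂ z) ^ l)⁻¹)
      ((ContinuousLinearMap.restrictScalars ℝ
        (ContinuousLinearMap.smulRight (1 : ℂ →L[ℂ] ℂ)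
          (-((l : ℂ) * (starRingEnd ℂ ζ) ^ (l - 1)) / ((starRingEnd ℂ ζ) ^ l) ^ 2))).comp
        (conjCLE : ℂ ≃L[ℝ] ℂ).toContinuousLinearMap) ζ :=
    ((hb0.hasFDerivAt).restrictScalars ℝ).comp ζ hconj
  have hmul := ha.mul hb
  have heq : Hfun k l =ᶠ[nhds ζ] fun z : ℂ => z ^ k * ((starRingEnd ℂ z) ^ l)⁻¹ := by
    filter_upwards [isOpen_compl_singleton.mem_nhds hζ] with x hx
    have hx' : x ≠ 0 := hx
    simp [Hfun, hx', div_eq_mul_inv]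
  have := hmul.congr_of_eventuallyEq heq
  refine this.congr_fderiv (Eq.symm ?_)
  ext w
  simp only [Dfun, Hfun, if_neg hζ, ContinuousLinearMap.sub_apply,
    ContinuousLinearMap.smul_apply, ContinuousLinearMap.id_apply,
    ContinuousLinearMap.add_apply, ContinuousLinearMap.coe_smul', Pi.smul_apply,
    ContinuousLinearMap.coe_comp', Function.comp_apply,
    ContinuousLinearMap.coe_restrictScalars', ContinuousLinearMap.smulRight_apply,
    ContinuousLinearMap.one_apply, ContinuousLinearEquiv.coe_coe, conjCLE_apply,
    smul_eq_mul]
  rcases Nat.eq_zero_or_pos l with rfl | hl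
  · simp only [pow_zero, Nat.cast_zero, zero_mul, neg_zero, zero_div, mul_zero, sub_zero,
      inv_one, one_pow, div_one, mul_one]
    ring
  · have h2l : ((starRingEnd ℂ) ζ) ^ (2 * l) = ((starRingEnd ℂ) ζ) ^ (l + 1) * ((starRingEnd ℂ) ζ) ^ (l - 1) := by
      rw [← pow_add]; congr 1; omega
    field_simp
    obtain ⟨m, rfl⟩ : ∃ m, l = m + 1 := ⟨l - 1, by omega⟩
    simp only [Nat.add_sub_cancel]
    ring

private lemma hasFDerivAt_Hfun_zero (k l : ℕ) (hkl : l + 2 ≤ k) :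
    HasFDerivAt (Hfun k l) (Dfun k l 0) 0 := by
  have hD0 : Dfun k l 0 = 0 := by
    ext w
    simp [Dfun, Hfun]
  rw [hD0, hasFDerivAt_iff_isLittleO_nhds_zero]
  have h0 : Hfun k l 0 = 0 := by simp [Hfun]
  simp only [zero_add, h0, ContinuousLinearMap.zero_apply, sub_zero]
  have hbig : (fun ζ : ℂ => Hfun k l ζ) =O[nhds 0] fun ζ : ℂ => ‖ζ‖ ^ 2 := by
    apply IsBigO.of_bound 1
    have : Metric.closedBall (0 : ℂ) 1 ∈ nhds (0 : ℂ) := Metric.closedBall_mem_nhds 0 one_pos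
    filter_upwards [this] with x hx
    rw [Hfun_norm k l (by omega), one_mul, norm_pow, norm_norm]
    exact pow_le_pow_of_le_one (norm_nonneg _) (by simpa using hx) (by omega)
  exact hbig.trans_isLittleO (isLittleO_norm_pow_id one_lt_two)

private lemma key : ∀ n : ℕ, ∀ k l : ℕ, l + n + 1 ≤ k → ContDiffAt ℝ n (Hfun k l) 0 := by
  intro n
  induction n with
  | zero =>
    intro k l h
    exact contDiffAt_zero.2 ⟨Set.univ, Filter.univ_mem,
      (Hfun_continuous k l (by omega)).continuousOn⟩
  | succ n ih =>
    intro k l h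
    have : ((n + 1 : ℕ) : WithTop ℕ∞) = (n : ℕ) + 1 := by push_cast; rfl
    rw [this, contDiffAt_succ_iff_hasFDerivAt]
    refine ⟨Dfun k l, ⟨Set.univ, Filter.univ_mem, fun ζ _ => ?_⟩, ?_⟩
    · rcases eq_or_ne ζ 0 with rfl | hζ
      · exact hasFDerivAt_Hfun_zero k l (by omega)
      · exact hasFDerivAt_Hfun_ne k l (by omega) hζ
    · have h1 : ContDiffAt ℝ n (fun ζ => (k : ℂ) * Hfun (k - 1) l ζ) 0 :=
        contDiffAt_const.mul (ih (k - 1) l (by omega))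
      have h2 : ContDiffAt ℝ n (fun ζ => (l : ℂ) * Hfun k (l + 1) ζ) 0 :=
        contDiffAt_const.mul (ih k (l + 1) (by omega))
      have hL1 : ContDiffAt ℝ n (fun ζ : ℂ =>
          ((k : ℂ) * Hfun (k - 1) l ζ) • (ContinuousLinearMap.id ℝ ℂ)) 0 := by
        exact (((ContinuousLinearMap.lsmul ℝ ℂ).flip
          (ContinuousLinearMap.id ℝ ℂ)).contDiff.contDiffAt).comp 0 h1
      have hL2 : ContDiffAt ℝ n (fun ζ : ℂ =>
          ((l : ℂ) * Hfun k (l + 1) ζ) • (conjCLE : ℂ ≃L[ℝ] ℂ).toContinuousLinearMap) 0 := by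
        exact (((ContinuousLinearMap.lsmul ℝ ℂ).flip
          (conjCLE : ℂ ≃L[ℝ] ℂ).toContinuousLinearMap).contDiff.contDiffAt).comp 0 h2
      exact hL1.sub hL2

/-- The function `h(ζ) = ζ^k / ζ̄^l` (with `h(0) = 0`), where `k ≥ l + r` and `r ≥ 1`,
is `(r−1)`-times continuously differentiable (in the real sense) at `0`. -/
theorem zeta_pow_div_conj_pow_contDiffAt (k l r : ℕ) (hr : 1 ≤ r) (hk : l + r ≤ k) :
    ContDiffAt ℝ (r - 1 : ℕ)
      (fun ζ : ℂ => if ζ = 0 then 0 else ζ ^ k / (starRingEnd ℂ ζ) ^ l) 0 := by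
  exact key (r - 1) k l (by omega)
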